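/- For all ρA, ρB ∈ Ω_n, the quantum optimal transport cost with cost matrix C^Q satisfies T_{C^Q}(ρA, ρB) ≤ (1/2)·(1 − Re(trace(ρA * ρB))). Moreover, if ρA or ρB is a pure state (i.e., equals x xᴴ for some unit vector x ∈ ℂ^n), then equality holds: T_{C^Q}(ρA, ρB) = (1/2)·(1 − Re(trace(ρA * ρB))). -/

import Mathlib

open Matrix ComplexOrder

/-- A density matrix: positive semidefinite with trace one. -/
def IsDensityMatrix {k : Type*} [Fintype k] [DecidableEq k] (ρ : Matrix k k ℂ) : Prop :=
  ρ.PosSemidef ∧ ρ.trace = 1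

/-- Partial trace over the second factor. -/
noncomputable def trB {m n : ℕ} (R : Matrix (Fin m × Fin n) (Fin m × Fin n) ℂ) :
    Matrix (Fin m) (Fin m) ℂ :=
  Matrix.of fun i j => ∑ p, R (i, p) (j, p)

/-- Partial trace over the first factor. -/
noncomputable def trA {m n : ℕ} (R : Matrix (Fin m × Fin n) (Fin m × Fin n) ℂ) :
    Matrix (Fin n) (Fin n) ℂ :=
  Matrix.of fun p q => ∑ i, R (i, p) (i, q)

/-- The set of quantum couplings of two density matrices. -/
def QCouplings {m n : ℕ} (ρA : Matrix (Fin m) (Fin m) ℂ) (ρB : Matrix (Fin n) (Fin n) ℂ) :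
    Set (Matrix (Fin m × Fin n) (Fin m × Fin n) ℂ) :=
  {R | IsDensityMatrix R ∧ trB R = ρA ∧ trA R = ρB}

/-- The quantum optimal transport cost. -/
noncomputable def QOT {m n : ℕ} (C : Matrix (Fin m × Fin n) (Fin m × Fin n) ℂ)
    (ρA : Matrix (Fin m) (Fin m) ℂ) (ρB : Matrix (Fin n) (Fin n) ℂ) : ℝ :=
  sInf ((fun R => ((C * R).trace).re) '' QCouplings ρA ρB)

/-- The SWAP matrix on `Fin n × Fin n`. -/
noncomputable def swapM (n : ℕ) : Matrix (Fin n × Fin n) (Fin n × Fin n) ℂ :=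
  Matrix.of fun x y => if x.1 = y.2 ∧ x.2 = y.1 then 1 else 0

/-- The quantum cost matrix `C^Q = (1/2) (I - S)`. -/
noncomputable def CQ (n : ℕ) : Matrix (Fin n × Fin n) (Fin n × Fin n) ℂ :=
  (1 / 2 : ℂ) • (1 - swapM n)

/-- Kronecker product of square matrices indexed by `Fin m` and `Fin n`. -/
noncomputable def kron {m n : ℕ} (A : Matrix (Fin m) (Fin m) ℂ)
    (B : Matrix (Fin n) (Fin n) ℂ) : Matrix (Fin m × Fin n) (Fin m × Fin n) ℂ :=
  Matrix.of fun x y => A x.1 y.1 * B x.2 y.2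

namespace QotAux
open Matrix ComplexOrder

noncomputable def wv {n : ℕ} (v : Fin n → ℂ) (p : Fin n) : Fin n × Fin n → ℂ :=
  fun z => if z.2 = p then v z.1 else 0

variable {m n : ℕ}

lemma trace_swapM_mul (R : Matrix (Fin n × Fin n) (Fin n × Fin n) ℂ) :
    (swapM n * R).trace = ∑ z : Fin n × Fin n, R (z.2, z.1) z := by
  simp only [Matrix.trace, Matrix.diag, Matrix.mul_apply, swapM, Matrix.of_apply]
  refine Finset.sum_congr rfl fun z _ => ?_
  rw [Finset.sum_eq_single ((z.2, z.1) : Fin n × Fin n)]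
  · simp
  · intro y _ hy
    have : ¬ (z.1 = y.2 ∧ z.2 = y.1) := by
      intro ⟨h1, h2⟩; exact hy (Prod.ext h2.symm h1.symm)
    simp [this]
  · simp

lemma kron_mul (A B : Matrix (Fin m) (Fin m) ℂ) (A' B' : Matrix (Fin n) (Fin n) ℂ) :
    kron A A' * kron B B' = kron (A * B) (A' * B') := by
  ext z y
  simp only [kron, Matrix.mul_apply, Matrix.of_apply, Fintype.sum_prod_type]
  rw [show ((∑ k, A z.1 k * B k y.1) * ∑ r, A' z.2 r * B' r y.2)
      = ∑ k, ∑ r, (A z.1 k * B k y.1) * (A' z.2 r * B' r y.2) from Finset.sum_mul_sum _ _ _ _]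
  refine Finset.sum_congr rfl fun k _ => Finset.sum_congr rfl fun r _ => ?_
  ring

lemma kron_conjTranspose (A : Matrix (Fin m) (Fin m) ℂ) (B : Matrix (Fin n) (Fin n) ℂ) :
    (kron A B)ᴴ = kron Aᴴ Bᴴ := by
  ext z y
  simp [kron, Matrix.conjTranspose_apply, mul_comm]

open scoped MatrixOrder Matrix.Norms.L2Operator in
lemma posSemidef_eq_conjTranspose_mul_self' {k : Type*} [Fintype k] [DecidableEq k]
    {A : Matrix k k ℂ} (hA : A.PosSemidef) : ∃ B : Matrix k k ℂ, A = Bᴴ * B :=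
  CStarAlgebra.nonneg_iff_eq_star_mul_self.mp hA.nonneg

lemma kron_posSemidef {A : Matrix (Fin m) (Fin m) ℂ} {B : Matrix (Fin n) (Fin n) ℂ}
    (hA : A.PosSemidef) (hB : B.PosSemidef) : (kron A B).PosSemidef := by
  obtain ⟨P, rfl⟩ := posSemidef_eq_conjTranspose_mul_self' hA
  obtain ⟨Q, rfl⟩ := posSemidef_eq_conjTranspose_mul_self' hB
  rw [← kron_mul, ← kron_conjTranspose]
  exact Matrix.posSemidef_conjTranspose_mul_self _

lemma kron_trace (A : Matrix (Fin m) (Fin m) ℂ) (B : Matrix (Fin n) (Fin n) ℂ) :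
    (kron A B).trace = A.trace * B.trace := by
  simp [Matrix.trace, Matrix.diag, kron, Fintype.sum_prod_type, Finset.sum_mul, Finset.mul_sum]
  rw [Finset.sum_comm]

lemma trB_kron (A : Matrix (Fin m) (Fin m) ℂ) (B : Matrix (Fin n) (Fin n) ℂ)
    (hB : B.trace = 1) : trB (kron A B) = A := by
  ext i j
  simp [trB, kron, ← Finset.mul_sum, Matrix.trace, Matrix.diag] at *
  simp [hB]

lemma trA_kron (A : Matrix (Fin m) (Fin m) ℂ) (B : Matrix (Fin n) (Fin n) ℂ)
    (hA : A.trace = 1) : trA (kron A B) = B := by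
  ext p q
  simp [trA, kron, ← Finset.sum_mul, Matrix.trace, Matrix.diag] at *
  simp [hA]

lemma swapM_conjTranspose : (swapM n)ᴴ = swapM n := by
  ext z y
  simp only [Matrix.conjTranspose_apply, swapM, Matrix.of_apply]
  by_cases h : z.1 = y.2 ∧ z.2 = y.1
  · have h' : y.1 = z.2 ∧ y.2 = z.1 := ⟨h.2.symm, h.1.symm⟩
    rw [if_pos h, if_pos h']; simp
  · have h' : ¬(y.1 = z.2 ∧ y.2 = z.1) := fun ⟨a,b⟩ => h ⟨b.symm, a.symm⟩
    rw [if_neg h, if_neg h']; simp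

lemma swapM_mul_swapM : swapM n * swapM n = 1 := by
  ext z y
  simp only [Matrix.mul_apply, swapM, Matrix.of_apply]
  rw [Finset.sum_eq_single ((z.2, z.1) : Fin n × Fin n)]
  · by_cases h : z = y
    · subst h; simp
    · have : ¬ (z.2 = y.2 ∧ z.1 = y.1) := fun ⟨a,b⟩ => h (Prod.ext b a)
      simp [this, Matrix.one_apply, h]
  · intro w _ hw
    have : ¬ (z.1 = w.2 ∧ z.2 = w.1) := fun ⟨a,b⟩ => hw (Prod.ext b.symm a.symm)
    simp [this]
  · simp

lemma CQ_conjTranspose : (CQ n)ᴴ = CQ n := by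
  simp [CQ, Matrix.conjTranspose_smul, swapM_conjTranspose, conjTranspose_sub]

lemma CQ_idem : CQ n * CQ n = CQ n := by
  simp only [CQ, Matrix.smul_mul, Matrix.mul_smul, smul_smul]
  rw [sub_mul, one_mul, mul_sub, mul_one, swapM_mul_swapM]
  rw [show (1:ℂ)/2 * (1/2) = 1/4 by norm_num]
  rw [show (1 : Matrix (Fin n × Fin n) (Fin n × Fin n) ℂ) - swapM n - (swapM n - 1) = (2:ℂ) • (1 - swapM n) by
    rw [two_smul]
    abel]
  rw [smul_smul]
  norm_num

lemma re_trace_CQ_mul_nonneg (R : Matrix (Fin n × Fin n) (Fin n × Fin n) ℂ)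
    (hR : R.PosSemidef) : 0 ≤ ((CQ n * R).trace).re := by
  obtain ⟨A, rfl⟩ := posSemidef_eq_conjTranspose_mul_self' hR
  set N := CQ n * Aᴴ with hN
  have h2 : Nᴴ * N = A * CQ n * Aᴴ := by
    rw [hN, Matrix.conjTranspose_mul, Matrix.conjTranspose_conjTranspose, CQ_conjTranspose]
    calc A * CQ n * (CQ n * Aᴴ) = A * (CQ n * CQ n) * Aᴴ := by simp only [Matrix.mul_assoc]
    _ = A * CQ n * Aᴴ := by rw [CQ_idem]
  have h1 : (CQ n * (Aᴴ * A)).trace = (Nᴴ * N).trace := by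
    rw [h2, Matrix.trace_mul_comm (CQ n) (Aᴴ * A), Matrix.trace_mul_comm (A * CQ n) Aᴴ]
    simp only [Matrix.mul_assoc]
  rw [h1]
  have : ((Nᴴ * N).trace).re = ∑ j, ∑ i, Complex.normSq (N i j) := by
    simp only [Matrix.trace, Matrix.diag, Matrix.mul_apply, Matrix.conjTranspose_apply]
    rw [Complex.re_sum]
    refine Finset.sum_congr rfl fun j _ => ?_
    rw [Complex.re_sum]
    refine Finset.sum_congr rfl fun i _ => ?_
    simp [Complex.normSq_apply, Complex.mul_re]
  rw [this]
  exact Finset.sum_nonneg fun j _ => Finset.sum_nonneg fun i _ => Complex.normSq_nonneg _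

lemma trace_CQ_mul (R : Matrix (Fin n × Fin n) (Fin n × Fin n) ℂ) :
    (CQ n * R).trace = (1/2 : ℂ) * (R.trace - (swapM n * R).trace) := by
  rw [CQ, Matrix.smul_mul, Matrix.trace_smul, sub_mul, one_mul, Matrix.trace_sub]
  simp [smul_eq_mul]

lemma hdot (R : Matrix (Fin n × Fin n) (Fin n × Fin n) ℂ) (v : Fin n → ℂ) (p : Fin n) :
    star (wv v p) ⬝ᵥ R *ᵥ (wv v p)
      = ∑ i, ∑ j, (starRingEnd ℂ) (v i) * (R (i,p) (j,p) * v j) := by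
  simp only [dotProduct, Matrix.mulVec, dotProduct, wv, Pi.star_apply,
    apply_ite (star : ℂ → ℂ), star_zero, mul_ite, mul_zero, ite_mul, zero_mul,
    Fintype.sum_prod_type, Finset.sum_ite_eq', Finset.mem_univ, if_true]
  simp only [Finset.mul_sum]
  refine Finset.sum_congr rfl fun i _ => Finset.sum_congr rfl fun j _ => ?_
  simp only [RingHom.coe_coe, Complex.star_def]

lemma hsum (R : Matrix (Fin n × Fin n) (Fin n × Fin n) ℂ) (v : Fin n → ℂ) :
    ∑ p, star (wv v p) ⬝ᵥ R *ᵥ (wv v p) = star v ⬝ᵥ (trB R) *ᵥ v := by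
  simp only [hdot]
  rw [Finset.sum_comm]
  simp only [dotProduct, Matrix.mulVec, trB, Matrix.of_apply, Pi.star_apply]
  refine Finset.sum_congr rfl fun i _ => ?_
  rw [Finset.sum_comm, Finset.mul_sum]
  refine Finset.sum_congr rfl fun j _ => ?_
  rw [Finset.sum_mul, Finset.mul_sum]
  refine Finset.sum_congr rfl fun p _ => ?_
  simp only [Complex.star_def]

lemma hkill (R : Matrix (Fin n × Fin n) (Fin n × Fin n) ℂ) (hR : R.PosSemidef)
    (x : Fin n → ℂ) (hTB : trB R = Matrix.vecMulVec x (star x))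
    (v : Fin n → ℂ) (hv : star x ⬝ᵥ v = 0) (p : Fin n) : R *ᵥ (wv v p) = 0 := by
  have hs : ∑ p, star (wv v p) ⬝ᵥ R *ᵥ (wv v p) = 0 := by
    rw [hsum, hTB]
    have : (Matrix.vecMulVec x (star x)) *ᵥ v = (star x ⬝ᵥ v) • x := by
      ext i
      simp only [Matrix.mulVec, Matrix.vecMulVec_apply, dotProduct, Finset.smul_sum,
        Pi.smul_apply, smul_eq_mul, Pi.star_apply, Complex.star_def]
      rw [Finset.sum_mul]
      exact Finset.sum_congr rfl fun k _ => by ring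
    rw [this, hv]
    simp
  have hz := (Finset.sum_eq_zero_iff_of_nonneg
    (fun q _ => hR.dotProduct_mulVec_nonneg (wv v q))).mp hs p (Finset.mem_univ p)
  exact (hR.dotProduct_mulVec_zero_iff _).mp hz

lemma claim1 (R : Matrix (Fin n × Fin n) (Fin n × Fin n) ℂ) (hR : R.PosSemidef)
    (x : Fin n → ℂ) (hx : star x ⬝ᵥ x = 1) (hTB : trB R = Matrix.vecMulVec x (star x)) :
    ∀ (z : Fin n × Fin n) (j q : Fin n),
      R z (j, q) = (starRingEnd ℂ) (x j) * (R *ᵥ (wv x q)) z := by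
  intro z j q
  set v : Fin n → ℂ := Pi.single j 1 - (starRingEnd ℂ) (x j) • x with hvdef
  have hv : star x ⬝ᵥ v = 0 := by
    have h1 : star x ⬝ᵥ (Pi.single j 1 : Fin n → ℂ) = (starRingEnd ℂ) (x j) := by
      simp [dotProduct, Pi.single_apply, Finset.sum_ite_eq', Complex.star_def]
    rw [hvdef, dotProduct_sub, dotProduct_smul, h1, hx, smul_eq_mul, mul_one, sub_self]
  have hw : wv v q = wv (Pi.single j 1) q - (starRingEnd ℂ) (x j) • wv x q := by
    funext z'
    simp only [wv, hvdef, Pi.sub_apply, Pi.smul_apply, smul_eq_mul]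
    split <;> simp
  have hcol : R *ᵥ (wv (Pi.single j 1) q) = fun z' => R z' (j, q) := by
    funext z'
    simp only [Matrix.mulVec, dotProduct, wv, mul_ite, mul_zero,
      Fintype.sum_prod_type]
    rw [Finset.sum_comm]
    rw [Finset.sum_eq_single q]
    · simp [Pi.single_apply, Finset.sum_ite_eq', mul_ite]
    · intro b _ hb; simp [hb]
    · simp
  have hkz := hkill R hR x hTB v hv q
  rw [hw, Matrix.mulVec_sub, Matrix.mulVec_smul, hcol] at hkz
  have := sub_eq_zero.mp hkz
  have h2 := congrFun this z
  simpa using h2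

lemma structural (R : Matrix (Fin n × Fin n) (Fin n × Fin n) ℂ) (hR : R.PosSemidef)
    (x : Fin n → ℂ) (hx : star x ⬝ᵥ x = 1) (hTB : trB R = Matrix.vecMulVec x (star x)) :
    ∀ i p j q, R (i, p) (j, q) = x i * (starRingEnd ℂ) (x j) * trA R p q := by
  set F : Fin n → (Fin n × Fin n) → ℂ := fun q => R *ᵥ (wv x q) with hF
  set B : Matrix (Fin n) (Fin n) ℂ := fun p q => ∑ m, (starRingEnd ℂ) (F p (m, q)) * x m with hB
  have c1 := claim1 R hR x hx hTB
  have hFa : ∀ q, R *ᵥ wv x q = F q := fun _ => rfl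
  simp only [hFa] at c1
  have claim3 : ∀ q i p, F q (i, p) = x i * B p q := by
    intro q i p
    have : F q (i, p) = ∑ m, R (i, p) (m, q) * x m := by
      simp only [hF, Matrix.mulVec, dotProduct, wv, mul_ite, mul_zero, Fintype.sum_prod_type]
      rw [Finset.sum_comm, Finset.sum_eq_single q]
      · simp
      · intro b _ hb; simp [hb]
      · simp
    rw [this, hB, Finset.mul_sum]
    refine Finset.sum_congr rfl fun m _ => ?_
    have herm : R (i, p) (m, q) = star (R (m, q) (i, p)) := (hR.1.apply _ _).symm
    rw [herm, c1 (m, q) i p]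
    simp only [Complex.star_def, _root_.map_mul, Complex.conj_conj]
    ring
  have key : ∀ i p j q, R (i, p) (j, q) = x i * (starRingEnd ℂ) (x j) * B p q := by
    intro i p j q
    rw [c1 (i, p) j q, claim3 q i p]
    ring
  have hBtrA : ∀ p q, trA R p q = B p q := by
    intro p q
    simp only [trA, Matrix.of_apply]
    simp only [key]
    rw [← Finset.sum_mul]
    have : ∑ i, x i * (starRingEnd ℂ) (x i) = 1 := by
      rw [← hx]; simp [dotProduct, Complex.star_def, mul_comm]
    rw [this, one_mul]
  intro i p j q
  rw [key, hBtrA]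

end QotAux

open QotAux

/-- the independent-coupling upper bound for `T_{C^Q}`, with equality
when one of the marginals is a pure state. -/
theorem qot_CQ_upper_bound (n : ℕ) (ρA ρB : Matrix (Fin n) (Fin n) ℂ)
    (hA : IsDensityMatrix ρA) (hB : IsDensityMatrix ρB) :
    QOT (CQ n) ρA ρB ≤ (1 / 2) * (1 - ((ρA * ρB).trace).re) ∧
    ((∃ x : Fin n → ℂ, (∑ i, Complex.normSq (x i)) = 1 ∧
        (ρA = Matrix.vecMulVec x (star x) ∨ ρB = Matrix.vecMulVec x (star x))) →
      QOT (CQ n) ρA ρB = (1 / 2) * (1 - ((ρA * ρB).trace).re)) := by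
  obtain ⟨hAp, hAt⟩ := hA
  obtain ⟨hBp, hBt⟩ := hB
  set t : ℂ := (ρA * ρB).trace with ht
  set v0 : ℝ := (1/2) * (1 - t.re) with hv0
  have hSK : (swapM n * kron ρA ρB).trace = t := by
    rw [trace_swapM_mul, ht]
    simp only [kron, Matrix.of_apply, Matrix.trace, Matrix.diag, Matrix.mul_apply,
      Fintype.sum_prod_type]
    rw [Finset.sum_comm]
  have hmem : kron ρA ρB ∈ QCouplings ρA ρB :=
    ⟨⟨kron_posSemidef hAp hBp, by rw [kron_trace, hAt, hBt, one_mul]⟩,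
      trB_kron _ _ hBt, trA_kron _ _ hAt⟩
  have hbdd : BddBelow ((fun R => ((CQ n * R).trace).re) '' QCouplings ρA ρB) := by
    refine ⟨0, ?_⟩
    rintro y ⟨R, hR, rfl⟩
    exact re_trace_CQ_mul_nonneg R hR.1.1
  have hval : ∀ R ∈ QCouplings ρA ρB, (swapM n * R).trace = t →
      ((CQ n * R).trace).re = v0 := by
    intro R hR hS
    rw [trace_CQ_mul, hR.1.2, hS, hv0]
    rw [show (1/2:ℂ) = ((1/2:ℝ):ℂ) by norm_num, Complex.re_ofReal_mul,
      Complex.sub_re, Complex.one_re]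
  have hvk : ((CQ n * kron ρA ρB).trace).re = v0 := hval _ hmem hSK
  have part1 : QOT (CQ n) ρA ρB ≤ v0 := by
    have := csInf_le hbdd ⟨kron ρA ρB, hmem, hvk⟩
    exact this
  refine ⟨part1, ?_⟩
  rintro ⟨x, hx1, hcase⟩
  have hx : star x ⬝ᵥ x = 1 := by
    have h2 : star x ⬝ᵥ x = ((∑ i, Complex.normSq (x i) : ℝ) : ℂ) := by
      push_cast
      simp [dotProduct, Complex.normSq_eq_conj_mul_self, Complex.star_def]
    rw [h2, hx1]; norm_num
  have hall : ∀ R ∈ QCouplings ρA ρB, (swapM n * R).trace = t := by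
    intro R hR
    rcases hcase with hpa | hpb
    · have hst := structural R hR.1.1 x hx (by rw [hR.2.1, hpa])
      rw [trace_swapM_mul]
      have hz : ∀ z : Fin n × Fin n,
          R (z.2, z.1) z = x z.2 * (starRingEnd ℂ) (x z.1) * ρB z.1 z.2 := by
        intro z
        rw [hst z.2 z.1 z.1 z.2, hR.2.2]
      simp only [hz]
      rw [ht, hpa]
      simp only [Matrix.trace, Matrix.diag, Matrix.mul_apply, Matrix.vecMulVec_apply,
        Fintype.sum_prod_type, Pi.star_apply, Complex.star_def]
      rw [Finset.sum_comm]
    · set R' := R.submatrix Prod.swap Prod.swap with hR'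
      have hR'p : R'.PosSemidef := hR.1.1.submatrix _
      have htB' : trB R' = Matrix.vecMulVec x (star x) := by
        rw [← hpb, ← hR.2.2]
        ext i j
        simp only [trB, trA, Matrix.of_apply, hR', Matrix.submatrix_apply, Prod.swap_prod_mk]
      have hst := structural R' hR'p x hx htB'
      have htA' : trA R' = ρA := by
        rw [← hR.2.1]
        ext p q
        simp only [trA, trB, Matrix.of_apply, hR', Matrix.submatrix_apply, Prod.swap_prod_mk]
      rw [trace_swapM_mul]
      have hz : ∀ z : Fin n × Fin n,
          R (z.2, z.1) z = x z.1 * (starRingEnd ℂ) (x z.2) * ρA z.2 z.1 := by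
        intro z
        have : R (z.2, z.1) z = R' (z.1, z.2) (z.2, z.1) := rfl
        rw [this, hst z.1 z.2 z.2 z.1, htA']
      simp only [hz]
      rw [ht, hpb]
      simp only [Matrix.trace, Matrix.diag, Matrix.mul_apply, Matrix.vecMulVec_apply,
        Fintype.sum_prod_type, Pi.star_apply, Complex.star_def]
      rw [Finset.sum_comm]
      exact Finset.sum_congr rfl fun p _ => Finset.sum_congr rfl fun i _ => by ring
  refine le_antisymm part1 (le_csInf ⟨v0, kron ρA ρB, hmem, hvk⟩ ?_)
  rintro b ⟨R, hR, rfl⟩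
  exact (hval R hR (hall R hR)).ge
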